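/- For every simple graph G, the chromatic index of G is at most Δ(G) + 1, where Δ(G) is the maximum degree of G. -/

import Mathlib

open SimpleGraph

/-- A proper edge coloring: edges of `G` sharing a vertex get different colors. -/
def IsProperEdgeColoring {V : Type*} (G : SimpleGraph V) {t : ℕ} (c : Sym2 V → Fin t) : Prop :=
  ∀ e₁ ∈ G.edgeSet, ∀ e₂ ∈ G.edgeSet, e₁ ≠ e₂ → (∃ v, v ∈ e₁ ∧ v ∈ e₂) → c e₁ ≠ c e₂

/-- The chromatic index: least number of colors in a proper edge coloring. -/
noncomputable def chromaticIndex {V : Type*} (G : SimpleGraph V) : ℕ :=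
  sInf {t | ∃ c : Sym2 V → Fin t, IsProperEdgeColoring G c}

/-- Color `c` is missing at vertex `w` under coloring `α`. -/
def MissingAt {V : Type*} (G : SimpleGraph V) {t : ℕ} (α : Sym2 V → Fin t) (c : Fin t)
    (w : V) : Prop :=
  ∀ e ∈ G.edgeSet, w ∈ e → α e ≠ c

/-- The subgraph `K_α(a,b)` induced by the edges colored `a` or `b`. -/
def bicolored {V : Type*} (G : SimpleGraph V) {t : ℕ} (α : Sym2 V → Fin t) (a b : Fin t) :
    SimpleGraph V :=
  SimpleGraph.fromEdgeSet {e | e ∈ G.edgeSet ∧ (α e = a ∨ α e = b)}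

/-- `β` is obtained from `α` by a single Kempe change: swapping two colors `a`, `b` on a
connected component of the bicolored subgraph `K_α(a,b)`. -/
def IsKempeSwap {V : Type*} (G : SimpleGraph V) {t : ℕ} (α β : Sym2 V → Fin t) : Prop :=
  ∃ a b : Fin t, ∃ C : (bicolored G α a b).ConnectedComponent,
    (∀ e ∈ G.edgeSet, (α e = a ∨ α e = b) →
      (∀ v ∈ e, (bicolored G α a b).connectedComponentMk v = C) →
      ((α e = a ∧ β e = b) ∨ (α e = b ∧ β e = a))) ∧
    (∀ e : Sym2 V, (e ∉ G.edgeSet ∨ (α e ≠ a ∧ α e ≠ b) ∨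
        ∃ v ∈ e, (bicolored G α a b).connectedComponentMk v ≠ C) → β e = α e)

/-- Kempe equivalence: reachability by a sequence of Kempe changes. -/
def KempeEquiv {V : Type*} (G : SimpleGraph V) {t : ℕ} (α β : Sym2 V → Fin t) : Prop :=
  Relation.ReflTransGen (IsKempeSwap G) α β

/-- `G` is chordless: in every cycle, any two nonconsecutive vertices are nonadjacent. -/
def Chordless {V : Type*} (G : SimpleGraph V) : Prop :=
  ∀ n : ℕ, 3 ≤ n → ∀ c : ZMod n → V, Function.Injective c →
    (∀ i, G.Adj (c i) (c (i + 1))) →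
    ∀ i j : ZMod n, j ≠ i → j ≠ i + 1 → i ≠ j + 1 → ¬ G.Adj (c i) (c j)

/-- An `α`-fan at `u`: edges `u x₀, …, u xₚ` with `m i` a color missing at `x i`
and `α (u x_{i+1}) = m i`. -/
structure IsFan {V : Type*} (G : SimpleGraph V) {t : ℕ} (α : Sym2 V → Fin t)
    (u : V) (p : ℕ) (x : ℕ → V) (m : ℕ → Fin t) : Prop where
  adj : ∀ i ≤ p, G.Adj u (x i)
  inj : ∀ i ≤ p, ∀ j ≤ p, x i = x j → i = j
  missing : ∀ i ≤ p, MissingAt G α (m i) (x i)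
  succ : ∀ i < p, α s(u, x (i + 1)) = m i

/-- The coloring `X_u^{-1}(α,v)`: each fan edge `u xᵢ` is recolored with `m i`,
all other edges keep their color. -/
def IsFanRecolor {V : Type*} {t : ℕ} (α : Sym2 V → Fin t)
    (u : V) (p : ℕ) (x : ℕ → V) (m : ℕ → Fin t) (β : Sym2 V → Fin t) : Prop :=
  (∀ i ≤ p, β s(u, x i) = m i) ∧ (∀ e : Sym2 V, (∀ i ≤ p, e ≠ s(u, x i)) → β e = α e)

/-- A cycle fan is saturated if for every `i` the component of `K_α(α(u xᵢ), m_α(u))`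
containing `u` also contains `x_{i-1}` (cyclically). -/
def SaturatedCycleFan {V : Type*} (G : SimpleGraph V) {t : ℕ} (α : Sym2 V → Fin t)
    (u : V) (p : ℕ) (x : ℕ → V) (mu : Fin t) : Prop :=
  ∀ i ≤ p, (bicolored G α (α s(u, x i)) mu).connectedComponentMk u =
    (bicolored G α (α s(u, x i)) mu).connectedComponentMk (x (if i = 0 then p else i - 1))

section VizingProof

variable {V : Type*}

private lemma viz_edge_rep {G : SimpleGraph V} {e : Sym2 V} {w : V} (he : e ∈ G.edgeSet)
    (hw : w ∈ e) : ∃ y, G.Adj w y ∧ e = s(w, y) := by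
  induction e using Sym2.ind with
  | _ a b =>
    rw [Sym2.mem_iff] at hw
    rw [SimpleGraph.mem_edgeSet] at he
    rcases hw with rfl | rfl
    · exact ⟨b, he, rfl⟩
    · exact ⟨a, he.symm, Sym2.eq_swap⟩

private lemma viz_same_color {G : SimpleGraph V} {t : ℕ} {c : Sym2 V → Fin t}
    (hc : IsProperEdgeColoring G c) {e₁ e₂ : Sym2 V} {w : V}
    (h₁ : e₁ ∈ G.edgeSet) (h₂ : e₂ ∈ G.edgeSet) (hw₁ : w ∈ e₁) (hw₂ : w ∈ e₂)
    (hcc : c e₁ = c e₂) : e₁ = e₂ := by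
  by_contra hne
  exact hc e₁ h₁ e₂ h₂ hne ⟨w, hw₁, hw₂⟩ hcc

private lemma viz_exists_missing [Finite V] (G : SimpleGraph V) {t : ℕ} (c : Sym2 V → Fin t)
    (w : V) (h : (G.neighborSet w).ncard < t) : ∃ γ, MissingAt G c γ w := by
  classical
  set P : Set (Fin t) := (fun y => c s(w, y)) '' G.neighborSet w with hP
  have hPcard : P.ncard < t :=
    lt_of_le_of_lt (Set.ncard_image_le (G.neighborSet w).toFinite) h
  have hPne : P ≠ Set.univ := by
    intro hEq
    rw [hEq, Set.ncard_univ, Nat.card_eq_fintype_card, Fintype.card_fin] at hPcard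
    omega
  obtain ⟨γ, hγ⟩ := (Set.ne_univ_iff_exists_notMem P).mp hPne
  refine ⟨γ, fun e he hw heq => ?_⟩
  obtain ⟨y, hy, rfl⟩ := viz_edge_rep he hw
  exact hγ ⟨y, hy, heq⟩

section Paths

variable {H : SimpleGraph V}

private lemma viz_deg2_support
    (hyp2 : ∀ w y₁ y₂ y₃, H.Adj w y₁ → H.Adj w y₂ → H.Adj w y₃ →
      y₁ = y₂ ∨ y₁ = y₃ ∨ y₂ = y₃) :
    ∀ {s t : V} (p : H.Walk s t), p.IsPath → ∀ w ∈ p.support, w ≠ s → w ≠ t →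
      ∀ y, H.Adj w y → y ∈ p.support := by
  intro s t p
  induction p with
  | nil =>
    intro _ w hw hws _ y _
    simp only [SimpleGraph.Walk.support_nil, List.mem_singleton] at hw
    exact absurd hw hws
  | @cons s b t h' p' ih =>
    intro hp w hw hws hwt y hy
    rw [SimpleGraph.Walk.support_cons, List.mem_cons] at hw
    rcases hw with rfl | hw
    · exact absurd rfl hws
    rw [SimpleGraph.Walk.support_cons]
    by_cases hwb : w = b
    · subst hwb
      cases p' with
      | nil => exact absurd rfl hwt
      | @cons _ s₂ _ h'' p'' =>
        have hs_not : s ∉ (SimpleGraph.Walk.cons h'' p'').support :=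
          ((SimpleGraph.Walk.cons_isPath_iff _ _).mp hp).2
        have hss₂ : s ≠ s₂ := by
          intro hEq
          apply hs_not
          rw [hEq, SimpleGraph.Walk.support_cons]
          exact List.mem_cons_of_mem _ (SimpleGraph.Walk.start_mem_support _)
        rcases hyp2 w y s s₂ hy h'.symm h'' with rfl | rfl | hcon
        · exact List.mem_cons_self
        · refine List.mem_cons_of_mem _ ?_
          rw [SimpleGraph.Walk.support_cons]
          exact List.mem_cons_of_mem _ (SimpleGraph.Walk.start_mem_support _)
        · exact absurd hcon hss₂
    · exact List.mem_cons_of_mem _ (ih hp.of_cons w hw hwb hwt y hy)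

private lemma viz_closure
    (hyp2 : ∀ w y₁ y₂ y₃, H.Adj w y₁ → H.Adj w y₂ → H.Adj w y₃ →
      y₁ = y₂ ∨ y₁ = y₃ ∨ y₂ = y₃)
    {s t : V} (p : H.Walk s t) (hp : p.IsPath) (hst : s ≠ t)
    (h1s : ∀ y y', H.Adj s y → H.Adj s y' → y = y')
    (h1t : ∀ y y', H.Adj t y → H.Adj t y' → y = y') :
    ∀ w ∈ p.support, ∀ y, H.Adj w y → y ∈ p.support := by
  intro w hw y hy
  by_cases hws : w = s
  · subst hws
    cases p with
    | nil => exact absurd rfl hst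
    | cons h' p' =>
      have hyb := h1s y _ hy h'
      rw [hyb, SimpleGraph.Walk.support_cons]
      exact List.mem_cons_of_mem _ (SimpleGraph.Walk.start_mem_support _)
  by_cases hwt : w = t
  · subst hwt
    obtain ⟨b, hb, q, hq⟩ := SimpleGraph.Walk.exists_eq_cons_of_ne (Ne.symm hst) p.reverse
    have hyb := h1t y b hy hb
    subst hyb
    have hmem : y ∈ p.reverse.support := by
      rw [hq, SimpleGraph.Walk.support_cons]
      exact List.mem_cons_of_mem _ (SimpleGraph.Walk.start_mem_support _)
    rwa [SimpleGraph.Walk.support_reverse, List.mem_reverse] at hmem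
  exact viz_deg2_support hyp2 p hp w hw hws hwt y hy

private lemma viz_walk_stays {L : List V}
    (CL : ∀ w ∈ L, ∀ y, H.Adj w y → y ∈ L) :
    ∀ {a b : V} (q : H.Walk a b), a ∈ L → b ∈ L := by
  intro a b q
  induction q with
  | nil => exact id
  | cons h q ih => exact fun ha => ih (CL _ ha _ h)

private lemma viz_internal {s t : V} (p : H.Walk s t) (hp : p.IsPath) {w : V}
    (hw : w ∈ p.support) (hws : w ≠ s) (hwt : w ≠ t) :
    ∃ y z, y ≠ z ∧ H.Adj w y ∧ H.Adj w z := by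
  letI : DecidableEq V := Classical.decEq V
  have hspec := SimpleGraph.Walk.take_spec p hw
  obtain ⟨prev, hprev, r, hr⟩ :=
    SimpleGraph.Walk.exists_eq_cons_of_ne hws (p.takeUntil w hw).reverse
  obtain ⟨next, hnext, r₂, hr₂⟩ :=
    SimpleGraph.Walk.exists_eq_cons_of_ne hwt (p.dropUntil w hw)
  have hprevmem : prev ∈ (p.takeUntil w hw).support := by
    have : prev ∈ (p.takeUntil w hw).reverse.support := by
      rw [hr, SimpleGraph.Walk.support_cons]
      exact List.mem_cons_of_mem _ (SimpleGraph.Walk.start_mem_support _)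
    rwa [SimpleGraph.Walk.support_reverse, List.mem_reverse] at this
  have hnextmem : next ∈ (p.dropUntil w hw).support.tail := by
    rw [hr₂, SimpleGraph.Walk.support_cons]
    exact SimpleGraph.Walk.start_mem_support _
  have hnodup : ((p.takeUntil w hw).support ++ (p.dropUntil w hw).support.tail).Nodup := by
    have := hp.support_nodup
    rwa [← hspec, SimpleGraph.Walk.support_append] at this
  have hne : prev ≠ next := by
    intro hEq
    exact (List.disjoint_of_nodup_append hnodup) hprevmem (hEq ▸ hnextmem)
  exact ⟨prev, next, hne, hprev, hnext⟩

private lemma viz_not_both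
    (hyp2 : ∀ w y₁ y₂ y₃, H.Adj w y₁ → H.Adj w y₂ → H.Adj w y₃ →
      y₁ = y₂ ∨ y₁ = y₃ ∨ y₂ = y₃)
    {u s t : V} (hus : u ≠ s) (hut : u ≠ t) (hst : s ≠ t)
    (h1u : ∀ y y', H.Adj u y → H.Adj u y' → y = y')
    (h1s : ∀ y y', H.Adj s y → H.Adj s y' → y = y')
    (h1t : ∀ y y', H.Adj t y → H.Adj t y' → y = y')
    (hrs : H.Reachable u s) : ¬ H.Reachable u t := by
  letI : DecidableEq V := Classical.decEq V
  intro hrt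
  obtain ⟨q⟩ := hrt
  obtain ⟨p0⟩ := hrs
  set p : H.Walk u s := (p0.toPath : H.Walk u s) with hpdef
  have hp : p.IsPath := p0.toPath.2
  have CL := viz_closure hyp2 p hp hus h1u h1s
  have ht_mem : t ∈ p.support := viz_walk_stays CL q p.start_mem_support
  obtain ⟨y, z, hyz, hy, hz⟩ := viz_internal p hp ht_mem (Ne.symm hut) (Ne.symm hst)
  exact hyz (h1t y z hy hz)

end Paths

private lemma viz_bicolored_adj {G' : SimpleGraph V} {t : ℕ} {c : Sym2 V → Fin t}
    {a b : Fin t} {x y : V} (he : s(x, y) ∈ G'.edgeSet)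
    (hcol : c s(x, y) = a ∨ c s(x, y) = b) : (bicolored G' c a b).Adj x y := by
  rw [bicolored, SimpleGraph.fromEdgeSet_adj]
  exact ⟨⟨he, hcol⟩, (G'.mem_edgeSet.mp he).ne⟩

private lemma viz_reach_all {G' : SimpleGraph V} {t : ℕ} {c : Sym2 V → Fin t}
    {a b : Fin t} {z : V} {e : Sym2 V} (he : e ∈ G'.edgeSet) (hcol : c e = a ∨ c e = b)
    {w : V} (hw : w ∈ e) (hrw : (bicolored G' c a b).Reachable z w) :
    ∀ w' ∈ e, (bicolored G' c a b).Reachable z w' := by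
  induction e using Sym2.ind with
  | _ x y =>
    have hadj : (bicolored G' c a b).Adj x y := viz_bicolored_adj he hcol
    intro w' hw'
    rw [Sym2.mem_iff] at hw hw'
    rcases hw with rfl | rfl <;> rcases hw' with rfl | rfl
    · exact hrw
    · exact hrw.trans hadj.reachable
    · exact hrw.trans hadj.symm.reachable
    · exact hrw

private lemma viz_kempe_swap (G' : SimpleGraph V) {t : ℕ} (c : Sym2 V → Fin t)
    (hc : IsProperEdgeColoring G' c) (a b : Fin t) (hab : a ≠ b) (z : V) :
    ∃ c₂ : Sym2 V → Fin t, IsProperEdgeColoring G' c₂ ∧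
      (∀ e, c₂ e = c e ∨ ((c e = a ∧ c₂ e = b) ∨ (c e = b ∧ c₂ e = a))) ∧
      (∀ e, ∀ w ∈ e, ¬ (bicolored G' c a b).Reachable z w → c₂ e = c e) ∧
      (MissingAt G' c b z → MissingAt G' c₂ a z) := by
  classical
  set H := bicolored G' c a b with hH
  set cond : Sym2 V → Prop := fun e =>
    e ∈ G'.edgeSet ∧ (c e = a ∨ c e = b) ∧ (∀ w ∈ e, H.Reachable z w) with hcond
  set c₂ : Sym2 V → Fin t := fun e => if cond e then (if c e = a then b else a) else c e
    with hc₂def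
  have hval : ∀ e, cond e → c₂ e = (if c e = a then b else a) := by
    intro e h; simp only [hc₂def, if_pos h]
  have hval' : ∀ e, ¬ cond e → c₂ e = c e := by
    intro e h; simp only [hc₂def, if_neg h]
  have prop2 : ∀ e, c₂ e = c e ∨ ((c e = a ∧ c₂ e = b) ∨ (c e = b ∧ c₂ e = a)) := by
    intro e
    by_cases h : cond e
    · rcases h.2.1 with hca | hcb
      · refine Or.inr (Or.inl ⟨hca, ?_⟩); rw [hval e h, if_pos hca]
      · refine Or.inr (Or.inr ⟨hcb, ?_⟩)
        rw [hval e h, if_neg]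
        rw [hcb]; exact Ne.symm hab
    · exact Or.inl (hval' e h)
  have prop3 : ∀ e, ∀ w ∈ e, ¬ H.Reachable z w → c₂ e = c e := by
    intro e w hw hnr
    refine hval' e fun h => hnr (h.2.2 w hw)
  refine ⟨c₂, ?_, prop2, prop3, ?_⟩
  · -- properness
    intro e₁ he₁ e₂ he₂ hne ⟨w, hw₁, hw₂⟩ heq
    by_cases h₁ : cond e₁ <;> by_cases h₂ : cond e₂
    · rw [hval e₁ h₁, hval e₂ h₂] at heq
      rcases h₁.2.1 with hc1 | hc1 <;> rcases h₂.2.1 with hc2 | hc2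
      · exact hc e₁ he₁ e₂ he₂ hne ⟨w, hw₁, hw₂⟩ (hc1.trans hc2.symm)
      · rw [if_pos hc1, if_neg (hc2 ▸ Ne.symm hab)] at heq
        exact hab heq.symm
      · rw [if_neg (hc1 ▸ Ne.symm hab), if_pos hc2] at heq
        exact hab heq
      · exact hc e₁ he₁ e₂ he₂ hne ⟨w, hw₁, hw₂⟩ (hc1.trans hc2.symm)
    · -- e₁ swapped, e₂ not : contradiction, e₂ must satisfy cond
      refine h₂ ⟨he₂, ?_, ?_⟩
      · rw [hval e₁ h₁] at heq
        rw [hval' e₂ h₂] at heq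
        by_cases hc1 : c e₁ = a
        · rw [if_pos hc1] at heq; exact Or.inr heq.symm
        · rw [if_neg hc1] at heq; exact Or.inl heq.symm
      · -- all vertices of e₂ reachable
        have hcol₂ : c e₂ = a ∨ c e₂ = b := by
          rw [hval e₁ h₁] at heq
          rw [hval' e₂ h₂] at heq
          by_cases hc1 : c e₁ = a
          · rw [if_pos hc1] at heq; exact Or.inr heq.symm
          · rw [if_neg hc1] at heq; exact Or.inl heq.symm
        exact viz_reach_all he₂ hcol₂ hw₂ (h₁.2.2 w hw₁)
    · -- symmetric
      refine h₁ ⟨he₁, ?_, ?_⟩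
      · rw [hval e₂ h₂] at heq
        rw [hval' e₁ h₁] at heq
        by_cases hc2 : c e₂ = a
        · rw [if_pos hc2] at heq; exact Or.inr heq
        · rw [if_neg hc2] at heq; exact Or.inl heq
      · have hcol₁ : c e₁ = a ∨ c e₁ = b := by
          rw [hval e₂ h₂] at heq
          rw [hval' e₁ h₁] at heq
          by_cases hc2 : c e₂ = a
          · rw [if_pos hc2] at heq; exact Or.inr heq
          · rw [if_neg hc2] at heq; exact Or.inl heq
        exact viz_reach_all he₁ hcol₁ hw₁ (h₂.2.2 w hw₂)
    · rw [hval' e₁ h₁, hval' e₂ h₂] at heq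
      exact hc e₁ he₁ e₂ he₂ hne ⟨w, hw₁, hw₂⟩ heq
  · -- MissingAt transfer
    intro hmb e he hwz heq
    by_cases h : cond e
    · rw [hval e h] at heq
      by_cases hca : c e = a
      · rw [if_pos hca] at heq; exact hab heq.symm
      · rw [if_neg hca] at heq
        rcases h.2.1 with h' | h'
        · exact hca h'
        · exact hmb e he hwz h'
    · rw [hval' e h] at heq
      refine h ⟨he, Or.inl heq, viz_reach_all he (Or.inl heq) hwz (SimpleGraph.Reachable.refl z)⟩

end VizingProof
section VizingProof2

variable {V : Type*}

private lemma viz_rot [Finite V] {D : ℕ} (G : SimpleGraph V) {u v : V} (huv : G.Adj u v)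
    (c : Sym2 V → Fin (D+1)) (hc : IsProperEdgeColoring (G.deleteEdges {s(u,v)}) c)
    (p : ℕ) (x : ℕ → V) (m : ℕ → Fin (D+1)) (hx0 : x 0 = v)
    (hadj : ∀ k ≤ p, G.Adj u (x k))
    (hinj : ∀ k ≤ p, ∀ l ≤ p, x k = x l → k = l)
    (hmiss : ∀ k ≤ p, MissingAt (G.deleteEdges {s(u,v)}) c (m k) (x k))
    (hsucc : ∀ k < p, c s(u, x (k+1)) = m k)
    (hmu : MissingAt (G.deleteEdges {s(u,v)}) c (m p) u) :
    ∃ c' : Sym2 V → Fin (D+1), IsProperEdgeColoring G c' := by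
  classical
  have hE' : (G.deleteEdges {s(u,v)}).edgeSet = G.edgeSet \ {s(u,v)} :=
    SimpleGraph.edgeSet_deleteEdges _
  have hfanG : ∀ k, k ≤ p → s(u, x k) ∈ G.edgeSet := fun k hk =>
    (G.mem_edgeSet).mpr (hadj k hk)
  have hfanG' : ∀ k, k ≤ p → k ≠ 0 → s(u, x k) ∈ (G.deleteEdges {s(u,v)}).edgeSet := by
    intro k hk hk0
    rw [hE']
    refine ⟨hfanG k hk, ?_⟩
    simp only [Set.mem_singleton_iff]
    intro hEq
    have hxv : x k = v := Sym2.congr_right.mp hEq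
    exact hk0 (hinj k hk 0 (Nat.zero_le p) (hxv.trans hx0.symm))
  have hmne : ∀ k ≤ p, ∀ l ≤ p, k ≠ l → m k ≠ m l := by
    have key : ∀ k l, k < l → l ≤ p → m k ≠ m l := by
      intro k l hkl hlp hEq
      have hkp : k < p := lt_of_lt_of_le hkl hlp
      have h1 := hsucc k hkp
      rcases Nat.lt_or_ge l p with hl | hl
      · have h2 := hsucc l hl
        have hek : s(u, x (k+1)) ∈ (G.deleteEdges {s(u,v)}).edgeSet :=
          hfanG' (k+1) (by omega) (by omega)
        have hel : s(u, x (l+1)) ∈ (G.deleteEdges {s(u,v)}).edgeSet :=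
          hfanG' (l+1) (by omega) (by omega)
        have heqe : s(u, x (k+1)) = s(u, x (l+1)) :=
          viz_same_color hc hek hel (Sym2.mem_mk_left _ _) (Sym2.mem_mk_left _ _)
            (by rw [h1, h2, hEq])
        have := hinj (k+1) (by omega) (l+1) (by omega) (Sym2.congr_right.mp heqe)
        omega
      · have hlp' : l = p := le_antisymm hlp hl
        subst hlp'
        have hek : s(u, x (k+1)) ∈ (G.deleteEdges {s(u,v)}).edgeSet :=
          hfanG' (k+1) (by omega) (by omega)
        exact hmu _ hek (Sym2.mem_mk_left _ _) (h1.trans hEq)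
    intro k hk l hl hne
    rcases Nat.lt_or_ge k l with h | h
    · exact key k l h hl
    · exact fun hEq => key l k (lt_of_le_of_ne h (Ne.symm hne)) hk hEq.symm
  set c' : Sym2 V → Fin (D+1) := fun e =>
    if h : ∃ k, k ≤ p ∧ e = s(u, x k) then m (Nat.find h) else c e with hc'def
  have hfan_eval : ∀ k, k ≤ p → c' s(u, x k) = m k := by
    intro k hk
    have hex : ∃ k', k' ≤ p ∧ s(u, x k) = s(u, x k') := ⟨k, hk, rfl⟩
    have h1 : c' s(u, x k) = m (Nat.find hex) := by
      simp only [hc'def]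
      rw [dif_pos hex]
    obtain ⟨hle, hEq⟩ := Nat.find_spec hex
    have hkf : k = Nat.find hex := hinj k hk _ hle (Sym2.congr_right.mp hEq)
    rw [h1, ← hkf]
  have hnonfan : ∀ e, (∀ k, k ≤ p → e ≠ s(u, x k)) → c' e = c e := by
    intro e h
    have hne : ¬ ∃ k, k ≤ p ∧ e = s(u, x k) := by
      rintro ⟨k, hk, hEq⟩; exact h k hk hEq
    simp only [hc'def]
    rw [dif_neg hne]
  have hdc3 : ∀ k, k ≤ p → ∀ e ∈ (G.deleteEdges {s(u,v)}).edgeSet, u ∈ e →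
      (∀ l, l ≤ p → e ≠ s(u, x l)) → c e ≠ m k := by
    intro k hk e he hue hnf hEq
    rcases Nat.lt_or_ge k p with hkp | hkp
    · have h1 := hsucc k hkp
      have hed : e = s(u, x (k+1)) :=
        viz_same_color hc he (hfanG' (k+1) (by omega) (by omega)) hue
          (Sym2.mem_mk_left _ _) (hEq.trans h1.symm)
      exact hnf (k+1) (by omega) hed
    · have hkp' : k = p := le_antisymm hk hkp
      exact hmu e he hue (hkp' ▸ hEq)
  have hG'mem : ∀ e ∈ G.edgeSet, (∀ k, k ≤ p → e ≠ s(u, x k)) →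
      e ∈ (G.deleteEdges {s(u,v)}).edgeSet := by
    intro e he h
    rw [hE']
    refine ⟨he, ?_⟩
    simp only [Set.mem_singleton_iff]
    have := h 0 (Nat.zero_le p)
    rw [hx0] at this
    exact this
  refine ⟨c', ?_⟩
  rintro e₁ he₁ e₂ he₂ hne ⟨w, hw₁, hw₂⟩ heq
  by_cases hf₁ : ∃ k, k ≤ p ∧ e₁ = s(u, x k) <;>
    by_cases hf₂ : ∃ k, k ≤ p ∧ e₂ = s(u, x k)
  · obtain ⟨k₁, hk₁, rfl⟩ := hf₁
    obtain ⟨k₂, hk₂, rfl⟩ := hf₂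
    rw [hfan_eval k₁ hk₁, hfan_eval k₂ hk₂] at heq
    have hkk : k₁ ≠ k₂ := by
      intro h; exact hne (by rw [h])
    exact hmne k₁ hk₁ k₂ hk₂ hkk heq
  · obtain ⟨k, hk, rfl⟩ := hf₁
    push_neg at hf₂
    have hf₂' : ∀ l, l ≤ p → e₂ ≠ s(u, x l) := fun l hl => hf₂ l hl
    have he₂' := hG'mem e₂ he₂ hf₂'
    rw [hfan_eval k hk, hnonfan e₂ hf₂'] at heq
    rw [Sym2.mem_iff] at hw₁
    rcases hw₁ with rfl | rfl
    · exact hdc3 k hk e₂ he₂' hw₂ hf₂' heq.symm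
    · exact hmiss k hk e₂ he₂' hw₂ heq.symm
  · obtain ⟨k, hk, rfl⟩ := hf₂
    push_neg at hf₁
    have hf₁' : ∀ l, l ≤ p → e₁ ≠ s(u, x l) := fun l hl => hf₁ l hl
    have he₁' := hG'mem e₁ he₁ hf₁'
    rw [hfan_eval k hk, hnonfan e₁ hf₁'] at heq
    rw [Sym2.mem_iff] at hw₂
    rcases hw₂ with rfl | rfl
    · exact hdc3 k hk e₁ he₁' hw₁ hf₁' heq
    · exact hmiss k hk e₁ he₁' hw₁ heq
  · push_neg at hf₁ hf₂
    have hf₁' : ∀ l, l ≤ p → e₁ ≠ s(u, x l) := fun l hl => hf₁ l hl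
    have hf₂' : ∀ l, l ≤ p → e₂ ≠ s(u, x l) := fun l hl => hf₂ l hl
    rw [hnonfan e₁ hf₁', hnonfan e₂ hf₂'] at heq
    exact hc e₁ (hG'mem e₁ he₁ hf₁') e₂ (hG'mem e₂ he₂ hf₂') hne ⟨w, hw₁, hw₂⟩ heq

end VizingProof2
section VizingProof3

variable {V : Type*}

private lemma viz_ext [Finite V] {D : ℕ} (G : SimpleGraph V)
    (hdeg : ∀ w, (G.neighborSet w).ncard ≤ D) {u v : V} (huv : G.Adj u v)
    (c : Sym2 V → Fin (D+1)) (hc : IsProperEdgeColoring (G.deleteEdges {s(u,v)}) c) :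
    ∃ c' : Sym2 V → Fin (D+1), IsProperEdgeColoring G c' := by
  classical
  letI : DecidableEq V := Classical.decEq V
  set G' := G.deleteEdges {s(u,v)} with hG'
  have hE' : G'.edgeSet = G.edgeSet \ {s(u,v)} := SimpleGraph.edgeSet_deleteEdges _
  have hsub : ∀ w, G'.neighborSet w ⊆ G.neighborSet w := by
    intro w y hy
    rw [SimpleGraph.mem_neighborSet] at hy ⊢
    rw [hG', SimpleGraph.deleteEdges_adj] at hy
    exact hy.1
  have hdeg' : ∀ w, (G'.neighborSet w).ncard < D + 1 := fun w =>
    Nat.lt_succ_of_le (le_trans (Set.ncard_le_ncard (hsub w) (G.neighborSet w).toFinite)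
      (hdeg w))
  have hedge' : ∀ w, G.Adj u w → w ≠ v → s(u, w) ∈ G'.edgeSet := by
    intro w hw hwv
    rw [hE']
    refine ⟨G.mem_edgeSet.mpr hw, ?_⟩
    simp only [Set.mem_singleton_iff]
    intro hEq
    exact hwv (Sym2.congr_right.mp hEq)
  have key : ∀ (n i : ℕ) (x : ℕ → V) (m : ℕ → Fin (D+1)), D - i ≤ n → x 0 = v →
      (∀ k, k ≤ i → G.Adj u (x k)) → (∀ k, k ≤ i → ∀ l, l ≤ i → x k = x l → k = l) →
      (∀ k, k ≤ i → MissingAt G' c (m k) (x k)) → (∀ k, k < i → c s(u, x (k+1)) = m k) →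
      ∃ c' : Sym2 V → Fin (D+1), IsProperEdgeColoring G c' := by
    intro n
    induction n with
    | zero =>
      intro i x m hni hx0 hadj hinj hmiss hsucc
      exfalso
      have hDi : D ≤ i := by omega
      set F : Finset V := (Finset.range (i+1)).image x with hF
      have himg : F.card = i + 1 := by
        rw [hF, Finset.card_image_of_injOn, Finset.card_range]
        intro k hk l hl hEq
        exact hinj k (by simpa [Nat.lt_succ_iff] using Finset.mem_range.mp hk) l
          (by simpa [Nat.lt_succ_iff] using Finset.mem_range.mp hl) hEq
      have hsubn : (↑F : Set V) ⊆ G.neighborSet u := by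
        intro y hy
        simp only [hF, Finset.coe_image, Set.mem_image, Finset.mem_coe,
          Finset.mem_range] at hy
        obtain ⟨k, hk, rfl⟩ := hy
        exact hadj k (by omega)
      have hle : i + 1 ≤ (G.neighborSet u).ncard := by
        calc i + 1 = F.card := himg.symm
          _ = (↑F : Set V).ncard := (Set.ncard_coe_finset F).symm
          _ ≤ (G.neighborSet u).ncard :=
              Set.ncard_le_ncard hsubn (G.neighborSet u).toFinite
      have := hdeg u
      omega
    | succ n ih =>
      intro i x m hni hx0 hadj hinj hmiss hsucc
      by_cases hmu : MissingAt G' c (m i) u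
      · exact viz_rot G huv c hc i x m hx0 (fun k hk => hadj k hk)
          (fun k hk l hl => hinj k hk l hl) (fun k hk => hmiss k hk)
          (fun k hk => hsucc k hk) hmu
      · rw [MissingAt] at hmu
        push_neg at hmu
        obtain ⟨e, he, hue, hce⟩ := hmu
        obtain ⟨y, hGy, rfl⟩ := viz_edge_rep he hue
        have hGuy : G.Adj u y := by
          rw [hG', SimpleGraph.deleteEdges_adj] at hGy
          exact hGy.1
        have hyv : y ≠ v := by
          rintro rfl
          rw [hE'] at he
          exact he.2 rfl
        by_cases hy : ∃ j, j ≤ i ∧ y = x j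
        · -- Kempe chain case
          obtain ⟨j, hji, rfl⟩ := hy
          have hj0 : j ≠ 0 := fun h => hyv (by rw [h, hx0])
          have hjm : j - 1 < i := by omega
          have hmj1β : m (j-1) = m i := by
            have hs := hsucc (j-1) hjm
            rw [show j - 1 + 1 = j from by omega] at hs
            exact hs.symm.trans hce
          obtain ⟨α, hα⟩ := viz_exists_missing G' c u (hdeg' u)
          have hαβ : α ≠ m i := by
            intro hEq
            exact hα _ he hue (hce.trans hEq.symm)
          set H := bicolored G' c α (m i) with hH
          have hHadj : ∀ {w y' : V}, H.Adj w y' →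
              s(w, y') ∈ G'.edgeSet ∧ (c s(w, y') = α ∨ c s(w, y') = m i) := by
            intro w y' h
            rw [hH, bicolored, SimpleGraph.fromEdgeSet_adj] at h
            exact h.1
          have hsame : ∀ {w ya yb : V}, s(w, ya) ∈ G'.edgeSet → s(w, yb) ∈ G'.edgeSet →
              c s(w, ya) = c s(w, yb) → ya = yb := by
            intro w ya yb ha hb hcc
            exact Sym2.congr_right.mp
              (viz_same_color hc ha hb (Sym2.mem_mk_left _ _) (Sym2.mem_mk_left _ _) hcc)
          have hyp2 : ∀ w y₁ y₂ y₃, H.Adj w y₁ → H.Adj w y₂ → H.Adj w y₃ →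
              y₁ = y₂ ∨ y₁ = y₃ ∨ y₂ = y₃ := by
            intro w y₁ y₂ y₃ h₁ h₂ h₃
            obtain ⟨he₁, hc₁⟩ := hHadj h₁
            obtain ⟨he₂, hc₂⟩ := hHadj h₂
            obtain ⟨he₃, hc₃⟩ := hHadj h₃
            rcases hc₁ with h1 | h1 <;> rcases hc₂ with h2 | h2 <;> rcases hc₃ with h3 | h3
            · exact Or.inl (hsame he₁ he₂ (h1.trans h2.symm))
            · exact Or.inl (hsame he₁ he₂ (h1.trans h2.symm))
            · exact Or.inr (Or.inl (hsame he₁ he₃ (h1.trans h3.symm)))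
            · exact Or.inr (Or.inr (hsame he₂ he₃ (h2.trans h3.symm)))
            · exact Or.inr (Or.inr (hsame he₂ he₃ (h2.trans h3.symm)))
            · exact Or.inr (Or.inl (hsame he₁ he₃ (h1.trans h3.symm)))
            · exact Or.inl (hsame he₁ he₂ (h1.trans h2.symm))
            · exact Or.inl (hsame he₁ he₂ (h1.trans h2.symm))
          have hyp1 : ∀ (w : V) (γ : Fin (D+1)), (γ = α ∨ γ = m i) → MissingAt G' c γ w →
              ∀ y₁ y₂, H.Adj w y₁ → H.Adj w y₂ → y₁ = y₂ := by
            intro w γ hγor hmw y₁ y₂ h₁ h₂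
            obtain ⟨he₁, hc₁⟩ := hHadj h₁
            obtain ⟨he₂, hc₂⟩ := hHadj h₂
            have hne₁ : c s(w, y₁) ≠ γ := hmw _ he₁ (Sym2.mem_mk_left _ _)
            have hne₂ : c s(w, y₂) ≠ γ := hmw _ he₂ (Sym2.mem_mk_left _ _)
            have hcc : c s(w, y₁) = c s(w, y₂) := by
              rcases hγor with rfl | rfl
              · rcases hc₁ with h1 | h1
                · exact absurd h1 hne₁
                · rcases hc₂ with h2 | h2
                  · exact absurd h2 hne₂
                  · exact h1.trans h2.symm
              · rcases hc₁ with h1 | h1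
                · rcases hc₂ with h2 | h2
                  · exact h1.trans h2.symm
                  · exact absurd h2 hne₂
                · exact absurd h1 hne₁
            exact hsame he₁ he₂ hcc
          have h1u := hyp1 u α (Or.inl rfl) hα
          have h1xi := hyp1 (x i) (m i) (Or.inr rfl) (hmiss i le_rfl)
          have h1xj := hyp1 (x (j-1)) (m i) (Or.inr rfl) (hmj1β ▸ hmiss (j-1) (by omega))
          have hux : ∀ k, k ≤ i → u ≠ x k := fun k hk => (hadj k hk).ne
          have hxji : x (j-1) ≠ x i := by
            intro hEq
            have := hinj (j-1) (by omega) i le_rfl hEq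
            omega
          have hmkout : ∀ k, k < i → k ≠ j - 1 → m k ≠ α ∧ m k ≠ m i := by
            intro k hk hkj
            have hsk := hsucc k hk
            have hxk1v : x (k+1) ≠ v := by
              intro hEq
              have := hinj (k+1) (by omega) 0 (by omega) (hEq.trans hx0.symm)
              omega
            have hek : s(u, x (k+1)) ∈ G'.edgeSet := hedge' _ (hadj (k+1) (by omega)) hxk1v
            constructor
            · intro hEq
              exact hα _ hek (Sym2.mem_mk_left _ _) (hsk.trans hEq)
            · intro hEq
              have heqe : x (k+1) = x j := hsame hek he (by rw [hsk, hEq, ← hce])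
              have := hinj (k+1) (by omega) j hji heqe
              omega
          by_cases hreach : H.Reachable u (x (j-1))
          · -- swap on the component of x i
            have hnr : ¬ H.Reachable u (x i) :=
              viz_not_both hyp2 (hux (j-1) (by omega)) (hux i le_rfl) hxji h1u h1xj h1xi
                hreach
            obtain ⟨c₂, hc₂, prop2, prop3, prop4⟩ := viz_kempe_swap G' c hc α (m i) hαβ (x i)
            have hnru : ¬ H.Reachable (x i) u := fun h => hnr h.symm
            have hnrj : ¬ H.Reachable (x i) (x (j-1)) := fun h => hnr (hreach.trans h.symm)
            have hpres_unreach : ∀ (w : V) (γ : Fin (D+1)), ¬ H.Reachable (x i) w →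
                MissingAt G' c γ w → MissingAt G' c₂ γ w := by
              intro w γ hnrw hm e' he' hw'
              rw [prop3 e' w hw' hnrw]
              exact hm e' he' hw'
            have hpres_out : ∀ (w : V) (γ : Fin (D+1)), γ ≠ α → γ ≠ m i →
                MissingAt G' c γ w → MissingAt G' c₂ γ w := by
              intro w γ hgα hgβ hm e' he' hw' heq
              rcases prop2 e' with h | ⟨⟨h1, h2⟩ | ⟨h1, h2⟩⟩
              · exact hm e' he' hw' (h.symm.trans heq)
              · exact hgβ ((h2.symm.trans heq).symm)
              · exact hgα ((h2.symm.trans heq).symm)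
            refine viz_rot G huv c₂ hc₂ i x (Function.update m i α) hx0
              (fun k hk => hadj k hk) (fun k hk l hl => hinj k hk l hl) ?_ ?_ ?_
            · intro k hk
              by_cases hki : k = i
              · subst hki
                rw [Function.update_self]
                exact prop4 (hmiss k le_rfl)
              · rw [Function.update_of_ne hki]
                by_cases hkj : k = j - 1
                · subst hkj
                  exact hpres_unreach _ _ hnrj (hmiss (j-1) (by omega))
                · have hout := hmkout k (by omega) hkj
                  exact hpres_out _ _ hout.1 hout.2 (hmiss k (by omega))
            · intro k hk
              rw [Function.update_of_ne (by omega : k ≠ i)]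
              by_cases hkj : k + 1 = j
              · have h3 := prop3 s(u, x (k+1)) u (Sym2.mem_mk_left _ _) hnru
                rw [h3]
                exact hsucc k hk
              · have hout := hmkout k hk (by omega)
                have hsk := hsucc k hk
                rcases prop2 s(u, x (k+1)) with h | ⟨⟨h1, h2⟩ | ⟨h1, h2⟩⟩
                · rw [h]; exact hsk
                · exact absurd (hsk.symm.trans h1) hout.1
                · exact absurd (hsk.symm.trans h1) hout.2
            · rw [Function.update_self]
              exact hpres_unreach u α hnru hα
          · -- swap on the component of x (j-1)
            obtain ⟨c₂, hc₂, prop2, prop3, prop4⟩ :=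
              viz_kempe_swap G' c hc α (m i) hαβ (x (j-1))
            have hnru : ¬ H.Reachable (x (j-1)) u := fun h => hreach h.symm
            have hpres_unreach : ∀ (w : V) (γ : Fin (D+1)), ¬ H.Reachable (x (j-1)) w →
                MissingAt G' c γ w → MissingAt G' c₂ γ w := by
              intro w γ hnrw hm e' he' hw'
              rw [prop3 e' w hw' hnrw]
              exact hm e' he' hw'
            have hpres_out : ∀ (w : V) (γ : Fin (D+1)), γ ≠ α → γ ≠ m i →
                MissingAt G' c γ w → MissingAt G' c₂ γ w := by
              intro w γ hgα hgβ hm e' he' hw' heq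
              rcases prop2 e' with h | ⟨⟨h1, h2⟩ | ⟨h1, h2⟩⟩
              · exact hm e' he' hw' (h.symm.trans heq)
              · exact hgβ ((h2.symm.trans heq).symm)
              · exact hgα ((h2.symm.trans heq).symm)
            refine viz_rot G huv c₂ hc₂ (j-1) x (Function.update m (j-1) α) hx0
              (fun k hk => hadj k (by omega)) (fun k hk l hl => hinj k (by omega) l (by omega))
              ?_ ?_ ?_
            · intro k hk
              by_cases hkj : k = j - 1
              · subst hkj
                rw [Function.update_self]
                exact prop4 (hmj1β ▸ hmiss (j-1) (by omega))
              · rw [Function.update_of_ne hkj]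
                have hout := hmkout k (by omega) hkj
                exact hpres_out _ _ hout.1 hout.2 (hmiss k (by omega))
            · intro k hk
              rw [Function.update_of_ne (by omega : k ≠ j - 1)]
              have hout := hmkout k (by omega) (by omega)
              have hsk := hsucc k (by omega)
              rcases prop2 s(u, x (k+1)) with h | ⟨⟨h1, h2⟩ | ⟨h1, h2⟩⟩
              · rw [h]; exact hsk
              · exact absurd (hsk.symm.trans h1) hout.1
              · exact absurd (hsk.symm.trans h1) hout.2
            · rw [Function.update_self]
              exact hpres_unreach u α hnru hα
        · -- extend the fan
          push_neg at hy
          obtain ⟨γ, hγ⟩ := viz_exists_missing G' c y (hdeg' y)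
          refine ih (i+1) (Function.update x (i+1) y) (Function.update m (i+1) γ)
            (by omega) ?_ ?_ ?_ ?_ ?_
          · rw [Function.update_of_ne (by omega : (0:ℕ) ≠ i+1)]
            exact hx0
          · intro k hk
            by_cases hki : k = i + 1
            · subst hki
              rw [Function.update_self]
              exact hGuy
            · rw [Function.update_of_ne hki]
              exact hadj k (by omega)
          · intro k hk l hl hEq
            by_cases hki : k = i + 1 <;> by_cases hli : l = i + 1
            · omega
            · subst hki
              rw [Function.update_self, Function.update_of_ne hli] at hEq
              exact absurd hEq (hy l (by omega))
            · subst hli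
              rw [Function.update_of_ne hki, Function.update_self] at hEq
              exact absurd hEq.symm (hy k (by omega))
            · rw [Function.update_of_ne hki, Function.update_of_ne hli] at hEq
              exact hinj k (by omega) l (by omega) hEq
          · intro k hk
            by_cases hki : k = i + 1
            · subst hki
              rw [Function.update_self, Function.update_self]
              exact hγ
            · rw [Function.update_of_ne hki, Function.update_of_ne hki]
              exact hmiss k (by omega)
          · intro k hk
            by_cases hki : k = i
            · subst hki
              rw [Function.update_self, Function.update_of_ne (by omega : k ≠ k+1)]
              exact hce
            · rw [Function.update_of_ne (by omega : k + 1 ≠ i + 1),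
                Function.update_of_ne (by omega : k ≠ i + 1)]
              exact hsucc k (by omega)
  exact key (D - 0) 0 (fun _ => v) (fun _ => Classical.choose
      (viz_exists_missing G' c v (hdeg' v))) (by omega) rfl
    (fun k _ => huv) (fun k hk l hl _ => by omega)
    (fun k _ => Classical.choose_spec (viz_exists_missing G' c v (hdeg' v)))
    (fun k hk => absurd hk (by omega))

end VizingProof3
section VizingProof4

variable {V : Type*}

private lemma viz_main [Fintype V] {D : ℕ} :
    ∀ (n : ℕ) (G : SimpleGraph V), G.edgeSet.ncard = n →
      (∀ w, (G.neighborSet w).ncard ≤ D) →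
      ∃ c : Sym2 V → Fin (D+1), IsProperEdgeColoring G c := by
  intro n
  induction n using Nat.strong_induction_on with
  | _ n ih =>
    intro G hcard hdeg
    rcases Set.eq_empty_or_nonempty G.edgeSet with hE | ⟨e, he⟩
    · refine ⟨fun _ => ⟨0, Nat.succ_pos D⟩, fun e₁ he₁ => ?_⟩
      rw [hE] at he₁
      exact absurd he₁ (Set.notMem_empty _)
    · induction e using Sym2.ind with
      | _ u v =>
        have huv : G.Adj u v := G.mem_edgeSet.mp he
        have hlt : (G.deleteEdges {s(u,v)}).edgeSet.ncard < n := by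
          rw [SimpleGraph.edgeSet_deleteEdges, ← hcard]
          exact Set.ncard_diff_singleton_lt_of_mem he G.edgeSet.toFinite
        have hdeg' : ∀ w, ((G.deleteEdges {s(u,v)}).neighborSet w).ncard ≤ D := by
          intro w
          refine le_trans (Set.ncard_le_ncard ?_ (G.neighborSet w).toFinite) (hdeg w)
          intro y hy
          rw [SimpleGraph.mem_neighborSet] at hy ⊢
          rw [SimpleGraph.deleteEdges_adj] at hy
          exact hy.1
        obtain ⟨c, hc⟩ := ih _ hlt (G.deleteEdges {s(u,v)}) rfl hdeg'
        exact viz_ext G hdeg huv c hc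

end VizingProof4

/-- Vizing's theorem: `χ'(G) ≤ Δ(G) + 1` for every simple graph. -/
theorem stmt0 {V : Type*} [Fintype V] (G : SimpleGraph V) [DecidableRel G.Adj] :
    chromaticIndex G ≤ G.maxDegree + 1 := by
  classical
  have hdeg : ∀ w, (G.neighborSet w).ncard ≤ G.maxDegree := by
    intro w
    have h1 : (G.neighborSet w).ncard = G.degree w := by
      rw [← SimpleGraph.card_neighborSet_eq_degree, Set.ncard_eq_toFinset_card']
      simp
    rw [h1]
    exact G.degree_le_maxDegree w
  obtain ⟨c, hc⟩ := viz_main G.edgeSet.ncard G rfl hdeg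
  exact Nat.sInf_le ⟨c, hc⟩
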